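/- Let I^{(d)} = ⋂_ε ℘_ε^d be the ideal of the scheme of fat points of multiplicity d supported on the 2^n points [1:±1:…:±1] of ℙ^n. Then I^{(d)} = (x₀² − x_n², x₁² − x_n², …, x_{n−1}² − x_n²)^d; in particular, I^{(d)} is generated by the C(n+d−1, n−1) degree-2d forms ∏_{i=0}^{n−1} (x_i² − x_n²)^{a_i} with a ∈ ℕ^n, a₀+…+a_{n−1} = d. -/

import Mathlib

open MvPolynomial

/-- The vanishing ideal `℘_ε` of the point `[1:ε₁:…:εₙ] ∈ ℙⁿ`, generated by
the linear forms `x_i − ε_i·x₀`, `i = 1,…,n`. -/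
noncomputable def pIdeal (n : ℕ) (ε : Fin n → ℂ) :
    Ideal (MvPolynomial (Fin (n+1)) ℂ) :=
  Ideal.span { p | ∃ i : Fin n, p = X i.succ - C (ε i) * X (0 : Fin (n+1)) }

/-- The fat-point ideal `I^{(d)} = ⋂_{ε ∈ {±1}^n} ℘_ε^d`. -/
noncomputable def fatIdeal (n d : ℕ) : Ideal (MvPolynomial (Fin (n+1)) ℂ) :=
  ⨅ ε : {ε : Fin n → ℂ // ∀ i, ε i = 1 ∨ ε i = -1}, (pIdeal n ε.1) ^ d

section HardWork
open Polynomial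
local notation "X" => Polynomial.X
local notation "MX" => MvPolynomial.X

/-- cancel a factor with nonzero constant coefficient from X^d ∣ a*b -/
lemma cancelG {R : Type*} [CommRing R] [IsDomain R] (d : ℕ) (a : Polynomial R)
    (ha : a.coeff 0 ≠ 0) : ∀ (b : Polynomial R), X ^ d ∣ a * b → X ^ d ∣ b := by
  induction d with
  | zero => simp
  | succ d ih =>
    intro b h
    have h0 : (a * b).coeff 0 = 0 := by
      have := (Polynomial.X_pow_dvd_iff.mp h) 0 (Nat.succ_pos d)
      simpa using this
    rw [Polynomial.mul_coeff_zero] at h0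
    have hb0 : b.coeff 0 = 0 := by
      rcases mul_eq_zero.mp h0 with h' | h'
      · exact absurd h' ha
      · exact h'
    obtain ⟨b', rfl⟩ := Polynomial.X_dvd_iff.mpr hb0
    have hX : (X : Polynomial R) ≠ 0 := Polynomial.X_ne_zero
    have h2 : X ^ d ∣ a * b' := by
      have : X * (X ^ d) ∣ X * (a * b') := by
        have : a * (X * b') = X * (a * b') := by ring
        rw [this] at h
        simpa [pow_succ, mul_comm] using h
      exact (mul_dvd_mul_iff_left hX).mp this
    simpa [pow_succ, mul_comm] using mul_dvd_mul_left X (ih b' h2)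

/-- a substitution X ↦ X, coefficients via β, reflects X-order if the
"constant term of β" is injective. -/
lemma keyF {R S' : Type*} [CommRing R] [CommRing S'] (β : R →+* Polynomial S')
    (hΘ : Function.Injective fun r => (β r).coeff 0) (d : ℕ) (q : Polynomial R)
    (h : X ^ d ∣ q.eval₂ β X) : X ^ d ∣ q := by
  rw [Polynomial.X_pow_dvd_iff]
  rw [Polynomial.X_pow_dvd_iff] at h
  intro k hk
  induction k using Nat.strong_induction_on with
  | _ k ih =>
  have hcoeff : (q.eval₂ β X).coeff k = (β (q.coeff k)).coeff 0 := by
    rw [Polynomial.eval₂_eq_sum, Polynomial.sum_def, Polynomial.finset_sum_coeff]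
    by_cases hmem : k ∈ q.support
    · rw [Finset.sum_eq_single k]
      · simp [Polynomial.coeff_mul_X_pow']
      · intro e he hne
        rcases lt_or_gt_of_ne hne with hlt | hgt
        · exfalso
          exact (Polynomial.mem_support_iff.mp he) (ih e hlt (lt_trans hlt hk))
        · simp [Polynomial.coeff_mul_X_pow', Nat.not_le.mpr hgt]
      · intro hk'
        exact absurd hmem hk'
    · have hqk : q.coeff k = 0 := Polynomial.notMem_support_iff.mp hmem
      rw [hqk]
      rw [Finset.sum_eq_zero]
      · simp
      · intro e he
        rcases lt_trichotomy e k with hlt | heq | hgt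
        · exfalso
          exact (Polynomial.mem_support_iff.mp he) (ih e hlt (lt_trans hlt hk))
        · exact absurd (heq ▸ he) hmem
        · simp [Polynomial.coeff_mul_X_pow', Nat.not_le.mpr hgt]
  have := h k hk
  rw [hcoeff] at this
  have : (β (q.coeff k)).coeff 0 = (β 0).coeff 0 := by simpa using this
  exact hΘ this

open MvPolynomial in
noncomputable def rhoMap (n : ℕ) :
    MvPolynomial (Fin (n+1)) ℂ →ₐ[ℂ] Polynomial (MvPolynomial (Fin (n+1)) ℂ) :=
  aeval (fun i => Polynomial.C (MvPolynomial.X (Fin.last n)) +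
    X * Polynomial.C (MvPolynomial.X i - MvPolynomial.X (Fin.last n)))

noncomputable def nId (n : ℕ) : Ideal (MvPolynomial (Fin (n+1)) ℂ) :=
  Ideal.span { p | ∃ i : Fin n, p = MvPolynomial.X (Fin.castSucc i) - MvPolynomial.X (Fin.last n) }

lemma sub_last_mem (n : ℕ) (i : Fin (n+1)) :
    MvPolynomial.X i - MvPolynomial.X (Fin.last n) ∈ nId n := by
  rcases Fin.eq_castSucc_or_eq_last i with ⟨j, rfl⟩ | rfl
  · exact Ideal.subset_span ⟨j, rfl⟩
  · simp

lemma rho_coeff_mem (n : ℕ) (g : MvPolynomial (Fin (n+1)) ℂ) (k : ℕ) :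
    (rhoMap n g).coeff k ∈ (nId n) ^ k := by
  induction g using MvPolynomial.induction_on generalizing k with
  | C a =>
    cases k with
    | zero => simp [Ideal.one_eq_top]
    | succ k =>
      have : rhoMap n (MvPolynomial.C a) = Polynomial.C (MvPolynomial.C a) := by
        simp [rhoMap]
      simp [this]
  | add p q hp hq =>
    rw [map_add, Polynomial.coeff_add]
    exact add_mem (hp k) (hq k)
  | mul_X p i hp =>
    rw [map_mul]
    have hXi : rhoMap n (MvPolynomial.X i) = Polynomial.C (MvPolynomial.X (Fin.last n)) +
        X * Polynomial.C (MvPolynomial.X i - MvPolynomial.X (Fin.last n)) := by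
      simp [rhoMap]
    rw [hXi, mul_add, Polynomial.coeff_add]
    have e1 : (rhoMap n p * Polynomial.C (MvPolynomial.X (Fin.last n))).coeff k
        = (rhoMap n p).coeff k * MvPolynomial.X (Fin.last n) := Polynomial.coeff_mul_C _ _ _
    apply add_mem
    · rw [e1]
      exact Ideal.mul_mem_right _ _ (hp k)
    · have e2 : rhoMap n p * (X * Polynomial.C (MvPolynomial.X i - MvPolynomial.X (Fin.last n)))
          = X * (rhoMap n p * Polynomial.C (MvPolynomial.X i - MvPolynomial.X (Fin.last n))) := by
        ring
      rw [e2]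
      cases k with
      | zero => simp [Ideal.one_eq_top]
      | succ k =>
        rw [Polynomial.coeff_X_mul, Polynomial.coeff_mul_C]
        rw [pow_succ]
        exact Ideal.mul_mem_mul (hp k) (sub_last_mem n i)

lemma rho_eval_one (n : ℕ) (g : MvPolynomial (Fin (n+1)) ℂ) :
    Polynomial.eval 1 (rhoMap n g) = g := by
  have : ((Polynomial.evalRingHom (1 : MvPolynomial (Fin (n+1)) ℂ)).comp
      (rhoMap n).toRingHom) = RingHom.id _ := by
    apply MvPolynomial.ringHom_ext
    · intro a
      simp [rhoMap]
    · intro i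
      simp [rhoMap]
  exact congrArg (fun f => f g) this |>.trans rfl

lemma stepC (n d : ℕ) (g : MvPolynomial (Fin (n+1)) ℂ)
    (h : X ^ d ∣ rhoMap n g) : g ∈ (nId n) ^ d := by
  have hg : g = ((rhoMap n g).support).sum (fun k => (rhoMap n g).coeff k) := by
    conv_lhs => rw [← rho_eval_one n g]
    rw [Polynomial.eval_eq_sum, Polynomial.sum_def]
    simp
  rw [hg]
  apply Ideal.sum_mem
  intro k hk
  have hkd : d ≤ k := by
    by_contra hlt
    exact (Polynomial.mem_support_iff.mp hk) (Polynomial.X_pow_dvd_iff.mp h k (Nat.not_le.mp hlt))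
  exact Ideal.pow_le_pow_right hkd (rho_coeff_mem n g k)

noncomputable def baseP (n : ℕ) (i : Fin (n+1)) :
    Polynomial (MvPolynomial (Fin (n+1)) ℂ) :=
  Polynomial.C (MX (Fin.last n)) + X * Polynomial.C (MX i)

open MvPolynomial in
noncomputable def psiA (n : ℕ) :
    MvPolynomial (Fin (n+1)) ℂ →ₐ[ℂ] Polynomial (MvPolynomial (Fin (n+1)) ℂ) :=
  aeval (baseP n)

open MvPolynomial in
noncomputable def phi2 (n : ℕ) :
    MvPolynomial (Fin (n+1)) ℂ →ₐ[ℂ] MvPolynomial (Fin (n+1)) ℂ :=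
  aeval (fun i => (MX i)^2)

open MvPolynomial in
noncomputable def betaH (n : ℕ) :
    MvPolynomial (Fin (n+1)) ℂ →ₐ[ℂ] Polynomial (MvPolynomial (Fin (n+1)) ℂ) :=
  aeval (fun i => (baseP n (Fin.last n))^2 +
    (Polynomial.C (2 * MX (Fin.last n) * (MX i - MX (Fin.last n))) +
      X * Polynomial.C ((MX i)^2 - (MX (Fin.last n))^2)))

open MvPolynomial in
noncomputable def theta0 (n : ℕ) :
    MvPolynomial (Fin (n+1)) ℂ →ₐ[ℂ] MvPolynomial (Fin (n+1)) ℂ :=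
  aeval (fun i => MX (Fin.last n) * MX i)

open MvPolynomial in
noncomputable def aMap (n : ℕ) :
    MvPolynomial (Fin (n+1)) ℂ →ₐ[ℂ] MvPolynomial (Fin (n+1)) ℂ :=
  aeval (fun i => if i = Fin.last n then MX i else 2 * MX i - MX (Fin.last n))

open MvPolynomial in
noncomputable def aMap' (n : ℕ) :
    MvPolynomial (Fin (n+1)) ℂ →ₐ[ℂ] MvPolynomial (Fin (n+1)) ℂ :=
  aeval (fun i => if i = Fin.last n then MX i
    else MvPolynomial.C (2⁻¹:ℂ) * MX i + MvPolynomial.C (2⁻¹:ℂ) * MX (Fin.last n))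

noncomputable def expF (n : ℕ) (α : Fin (n+1) →₀ ℕ) : Fin (n+1) →₀ ℕ :=
  α + Finsupp.single (Fin.last n) (∑ i, α i)

lemma expF_inj (n : ℕ) : Function.Injective (expF n) := by
  intro α α' h
  have hs : (∑ i, (expF n α) i) = ∑ i, (expF n α') i := by rw [h]
  have hsum : ∀ β : Fin (n+1) →₀ ℕ, (∑ i, (expF n β) i) = 2 * ∑ i, β i := by
    intro β
    simp only [expF, Finsupp.add_apply, Finset.sum_add_distrib, Finsupp.single_apply,
      Finset.sum_ite_eq, Finset.mem_univ, if_pos]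
    ring
  rw [hsum, hsum] at hs
  have : (∑ i, α i) = ∑ i, α' i := by omega
  have := h
  unfold expF at this
  rwa [‹(∑ i, α i) = ∑ i, α' i›, add_left_inj] at this

open MvPolynomial in
lemma theta0_monomial (n : ℕ) (α : Fin (n+1) →₀ ℕ) (c : ℂ) :
    theta0 n (monomial α c) = monomial (expF n α) c := by
  rw [theta0, MvPolynomial.aeval_monomial, monomial_eq]
  have h1 : ∏ i ∈ α.support, (MX (Fin.last n) * MX i : MvPolynomial (Fin (n+1)) ℂ) ^ α i
      = ∏ i : Fin (n+1), (MX (Fin.last n) * MX i : MvPolynomial (Fin (n+1)) ℂ) ^ α i := by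
    apply Finset.prod_subset (Finset.subset_univ _)
    intro i _ hi
    simp [Finsupp.notMem_support_iff.mp hi]
  have h2 : (Finsupp.prod (expF n α) fun i e => (MX i : MvPolynomial (Fin (n+1)) ℂ) ^ e)
      = ∏ i : Fin (n+1), (MX i : MvPolynomial (Fin (n+1)) ℂ) ^ (expF n α) i := by
    rw [Finsupp.prod_fintype]
    intro i; simp
  have h3 : (Finsupp.prod α fun i e => (MX (Fin.last n) * MX i : MvPolynomial (Fin (n+1)) ℂ) ^ e)
      = ∏ i : Fin (n+1), (MX (Fin.last n) * MX i : MvPolynomial (Fin (n+1)) ℂ) ^ α i := by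
    rw [Finsupp.prod_of_support_subset α (Finset.subset_univ _)]
    intro i _; simp
  rw [h3, h2]
  have e1 : ∏ i : Fin (n+1), (MX (Fin.last n) * MX i : MvPolynomial (Fin (n+1)) ℂ) ^ α i
      = (MX (Fin.last n) : MvPolynomial (Fin (n+1)) ℂ) ^ (∑ i, α i) * ∏ i, (MX i : MvPolynomial (Fin (n+1)) ℂ) ^ α i := by
    simp only [mul_pow, Finset.prod_mul_distrib, Finset.prod_pow_eq_pow_sum]
  have e2 : ∏ i : Fin (n+1), (MX i : MvPolynomial (Fin (n+1)) ℂ) ^ (expF n α) i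
      = (∏ i, (MX i : MvPolynomial (Fin (n+1)) ℂ) ^ α i) * (MX (Fin.last n) : MvPolynomial (Fin (n+1)) ℂ) ^ (∑ i, α i) := by
    simp only [expF, Finsupp.add_apply, pow_add, Finset.prod_mul_distrib]
    congr 1
    rw [Finset.prod_eq_single (Fin.last n) ?_ ?_]
    · simp
    · intro b _ hb
      simp [Finsupp.single_apply, Ne.symm hb]
    · simp
  rw [e1, e2, MvPolynomial.algebraMap_eq]
  ring

section
variable (n : ℕ)
open MvPolynomial

lemma theta0_coeff (p : MvPolynomial (Fin (n+1)) ℂ) (α₀ : Fin (n+1) →₀ ℕ) :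
    coeff (expF n α₀) (theta0 n p) = coeff α₀ p := by
  conv_lhs => rw [MvPolynomial.as_sum p, map_sum]
  simp only [theta0_monomial]
  rw [MvPolynomial.coeff_sum]
  simp only [MvPolynomial.coeff_monomial]
  by_cases hmem : α₀ ∈ p.support
  · rw [Finset.sum_eq_single α₀ ?_ ?_]
    · simp
    · intro b _ hb
      rw [if_neg]
      exact fun hc => hb (expF_inj n hc)
    · intro h; exact absurd hmem h
  · rw [Finset.sum_eq_zero, MvPolynomial.notMem_support_iff.mp hmem]
    intro b hb
    rw [if_neg]
    intro hc
    exact hmem ((expF_inj n hc) ▸ hb)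

lemma theta0_inj : Function.Injective (theta0 n) := by
  intro p q h
  ext α
  rw [← theta0_coeff n p α, ← theta0_coeff n q α, h]

lemma aMap_leftinv (p : MvPolynomial (Fin (n+1)) ℂ) : aMap' n (aMap n p) = p := by
  have hcomp : (aMap' n).comp (aMap n) = AlgHom.id ℂ _ := by
    apply MvPolynomial.algHom_ext
    intro i
    by_cases hi : i = Fin.last n
    · simp [aMap, aMap', hi]
    · simp [aMap, aMap', hi, map_ofNat]
      have h2 : (MvPolynomial.C (2⁻¹:ℂ) : MvPolynomial (Fin (n+1)) ℂ) * 2 = 1 := by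
        rw [← map_ofNat (MvPolynomial.C : ℂ →+* MvPolynomial (Fin (n+1)) ℂ) 2,
          ← MvPolynomial.C_mul]
        norm_num
      linear_combination (MX i + MX (Fin.last n)) * h2
  exact congrArg (fun f => f p) hcomp |>.trans rfl

lemma aMap_inj : Function.Injective (aMap n) := by
  intro a b h
  have := congrArg (aMap' n) h
  rwa [aMap_leftinv, aMap_leftinv] at this

lemma thetaComp : ((Polynomial.evalRingHom (0 : MvPolynomial (Fin (n+1)) ℂ)).comp (betaH n).toRingHom)
    = ((aMap n).toRingHom.comp (theta0 n).toRingHom) := by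
  apply MvPolynomial.ringHom_ext
  · intro a
    simp [betaH, aMap, theta0, MvPolynomial.algebraMap_eq, Polynomial.algebraMap_apply]
  · intro i
    by_cases hi : i = Fin.last n
    · subst hi
      simp [betaH, aMap, theta0, baseP]
      ring
    · simp [betaH, aMap, theta0, baseP, hi]
      ring

lemma thetaInj : Function.Injective (fun r => ((betaH n) r).coeff 0) := by
  have hfun : (fun r => ((betaH n) r).coeff 0) = (aMap n) ∘ (theta0 n) := by
    funext r
    have := congrArg (fun f => f r) (thetaComp n)
    simpa [Polynomial.coeff_zero_eq_eval_zero] using this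
  rw [hfun]
  exact (aMap_inj n).comp (theta0_inj n)

lemma compId (p : MvPolynomial (Fin (n+1)) ℂ) :
    Polynomial.eval₂ (betaH n).toRingHom X (rhoMap n p) = psiA n (phi2 n p) := by
  have hcomp : (Polynomial.eval₂RingHom (betaH n).toRingHom X).comp (rhoMap n).toRingHom
      = (psiA n).toRingHom.comp (phi2 n).toRingHom := by
    apply MvPolynomial.ringHom_ext
    · intro a
      simp [rhoMap, psiA, phi2, betaH, MvPolynomial.algebraMap_eq, Polynomial.algebraMap_apply]
    · intro i
      simp [rhoMap, psiA, phi2, betaH, baseP, Polynomial.eval₂_add, Polynomial.eval₂_mul, map_ofNat]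
      ring
  exact congrArg (fun f => f p) hcomp |>.trans rfl

end

section
variable (n : ℕ)
open MvPolynomial

def sgC : Bool → ℂ := fun b => if b then -1 else 1

lemma sgC_sq (b : Bool) : sgC b * sgC b = 1 := by cases b <;> simp [sgC]

noncomputable def psiT (b : Fin (n+1) → Bool) :
    MvPolynomial (Fin (n+1)) ℂ →ₐ[ℂ] Polynomial (MvPolynomial (Fin (n+1)) ℂ) :=
  aeval (fun i => Polynomial.C (MvPolynomial.C (sgC (b i))) * baseP n i)

def parE (α : Fin (n+1) →₀ ℕ) : Fin (n+1) → Bool := fun i => decide (α i % 2 = 1)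

noncomputable def fPart (f : MvPolynomial (Fin (n+1)) ℂ) (T : Fin (n+1) → Bool) :
    MvPolynomial (Fin (n+1)) ℂ :=
  ∑ α ∈ f.support.filter (fun α => parE n α = T), monomial α (coeff α f)

lemma sum_fPart (f : MvPolynomial (Fin (n+1)) ℂ) : ∑ T, fPart n f T = f := by
  unfold fPart
  rw [Finset.sum_fiberwise]
  exact (MvPolynomial.as_sum f).symm

lemma charSum (α : Fin (n+1) →₀ ℕ) (T : Fin (n+1) → Bool) :
    (∑ b : Fin (n+1) → Bool, ((∏ i, if T i then sgC (b i) else 1) * ∏ i, sgC (b i) ^ α i))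
      = if parE n α = T then (2:ℂ)^(n+1) else 0 := by
  have hmerge : ∀ b : Fin (n+1) → Bool,
      ((∏ i, if T i then sgC (b i) else 1) * ∏ i, sgC (b i) ^ α i)
        = ∏ i, ((if T i then sgC (b i) else 1) * sgC (b i) ^ α i) := by
    intro b; rw [Finset.prod_mul_distrib]
  simp only [hmerge]
  have hswap : (∑ b : Fin (n+1) → Bool, ∏ i, ((if T i then sgC (b i) else 1) * sgC (b i) ^ α i))
      = ∏ i, ∑ c : Bool, ((if T i then sgC c else 1) * sgC c ^ α i) := by
    rw [Finset.prod_univ_sum]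
    rw [Fintype.piFinset_univ]
  rw [hswap]
  have hfac : ∀ i, (∑ c : Bool, ((if T i then sgC c else 1) * sgC c ^ α i))
      = if parE n α i = T i then 2 else 0 := by
    intro i
    rw [Fintype.sum_bool]
    rcases Nat.even_or_odd (α i) with he | ho
    · have h1 : ((-1:ℂ)) ^ α i = 1 := he.neg_one_pow
      have h2 : (parE n α i) = false := by
        simp [parE, Nat.even_iff.mp he]
      cases hT : T i <;> simp [sgC, h1, h2, hT] <;> norm_num
    · have h1 : ((-1:ℂ)) ^ α i = -1 := ho.neg_one_pow
      have h2 : (parE n α i) = true := by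
        simp [parE, Nat.odd_iff.mp ho]
      cases hT : T i <;> simp [sgC, h1, h2, hT] <;> norm_num
  rw [Finset.prod_congr rfl (fun i _ => hfac i)]
  by_cases hall : parE n α = T
  · rw [if_pos hall]
    have : ∀ i : Fin (n+1), (if parE n α i = T i then (2:ℂ) else 0) = 2 := by
      intro i; rw [if_pos (congrFun hall i)]
    rw [Finset.prod_congr rfl (fun i _ => this i), Finset.prod_const]
    simp
  · rw [if_neg hall]
    obtain ⟨i, hi⟩ : ∃ i, parE n α i ≠ T i := by
      by_contra h
      push_neg at h
      exact hall (funext h)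
    exact Finset.prod_eq_zero (Finset.mem_univ i) (by rw [if_neg hi])

lemma psiT_monomial (b : Fin (n+1) → Bool) (α : Fin (n+1) →₀ ℕ) (c : ℂ) :
    psiT n b (monomial α c) = (∏ i, sgC (b i) ^ α i) • psiA n (monomial α c) := by
  rw [psiT, psiA, MvPolynomial.aeval_monomial, MvPolynomial.aeval_monomial]
  rw [Finsupp.prod_of_support_subset α (Finset.subset_univ _) _ (by intro i _; simp),
    Finsupp.prod_of_support_subset α (Finset.subset_univ _) _ (by intro i _; simp)]
  simp only [mul_pow, Finset.prod_mul_distrib]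
  have hC : (∏ i, (Polynomial.C (MvPolynomial.C (sgC (b i))))^ α i :
      Polynomial (MvPolynomial (Fin (n+1)) ℂ))
      = Polynomial.C (MvPolynomial.C (∏ i, sgC (b i) ^ α i)) := by
    rw [map_prod, map_prod]
    congr 1
    funext i
    rw [map_pow, map_pow]
  rw [hC, Algebra.smul_def]
  have : (algebraMap ℂ (Polynomial (MvPolynomial (Fin (n+1)) ℂ))) (∏ i, sgC (b i) ^ α i)
      = Polynomial.C (MvPolynomial.C (∏ i, sgC (b i) ^ α i)) := by
    rw [Polynomial.algebraMap_apply, MvPolynomial.algebraMap_eq]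
  rw [this]
  ring

lemma fourierPsi (f : MvPolynomial (Fin (n+1)) ℂ) (T : Fin (n+1) → Bool) :
    ∑ b : Fin (n+1) → Bool, (∏ i, if T i then sgC (b i) else 1) • psiT n b f
      = ((2:ℂ)^(n+1)) • psiA n (fPart n f T) := by
  have hexp : ∀ b : Fin (n+1) → Bool,
      (∏ i, if T i then sgC (b i) else 1) • psiT n b f
        = ∑ α ∈ f.support, ((∏ i, if T i then sgC (b i) else 1) * ∏ i, sgC (b i) ^ α i)
            • psiA n (monomial α (coeff α f)) := by
    intro b
    conv_lhs => rw [MvPolynomial.as_sum f, map_sum, Finset.smul_sum]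
    refine Finset.sum_congr rfl (fun α _ => ?_)
    rw [psiT_monomial, smul_smul]
  simp only [hexp]
  rw [Finset.sum_comm]
  have hinner : ∀ α ∈ f.support,
      (∑ b : Fin (n+1) → Bool, ((∏ i, if T i then sgC (b i) else 1) * ∏ i, sgC (b i) ^ α i)
          • psiA n (monomial α (coeff α f)))
        = (if parE n α = T then (2:ℂ)^(n+1) else 0) • psiA n (monomial α (coeff α f)) := by
    intro α _
    rw [← Finset.sum_smul, charSum]
  rw [Finset.sum_congr rfl hinner]
  rw [fPart, map_sum, Finset.smul_sum]
  rw [Finset.sum_filter]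
  congr 1
  funext α
  split <;> simp

section
variable (n : ℕ)
open MvPolynomial

noncomputable def halveE (α : Fin (n+1) →₀ ℕ) : Fin (n+1) →₀ ℕ :=
  Finsupp.mapRange (· / 2) (by simp) α

noncomputable def bTE (T : Fin (n+1) → Bool) : Fin (n+1) →₀ ℕ :=
  Finsupp.equivFunOnFinite.symm (fun i => if T i then 1 else 0)

lemma exp_decomp (α : Fin (n+1) →₀ ℕ) (T : Fin (n+1) → Bool) (h : parE n α = T) :
    bTE n T + (halveE n α + halveE n α) = α := by
  ext i
  have hi := congrFun h i
  simp only [parE] at hi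
  simp only [Finsupp.add_apply, bTE, halveE, Finsupp.mapRange_apply,
    Finsupp.coe_equivFunOnFinite_symm]
  cases hT : T i
  · rw [hT] at hi
    have : ¬ (α i % 2 = 1) := by simpa using hi
    simp only [Bool.false_eq_true, if_false]
    omega
  · rw [hT] at hi
    have : α i % 2 = 1 := by simpa using hi
    simp only [if_true]
    omega

lemma phi2_monomial (β : Fin (n+1) →₀ ℕ) (c : ℂ) :
    phi2 n (monomial β c) = monomial (β + β) c := by
  rw [phi2, MvPolynomial.aeval_monomial, monomial_eq]
  rw [Finsupp.prod_of_support_subset β (Finset.subset_univ _) _ (by intro i _; simp),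
    Finsupp.prod_of_support_subset (β + β) (Finset.subset_univ _) _ (by intro i _; simp)]
  rw [MvPolynomial.algebraMap_eq]
  congr 1
  apply Finset.prod_congr rfl
  intro i _
  rw [Finsupp.add_apply, ← pow_mul, two_mul]

noncomputable def gPart (f : MvPolynomial (Fin (n+1)) ℂ) (T : Fin (n+1) → Bool) :
    MvPolynomial (Fin (n+1)) ℂ :=
  ∑ α ∈ f.support.filter (fun α => parE n α = T), monomial (halveE n α) (coeff α f)

lemma fPart_factor (f : MvPolynomial (Fin (n+1)) ℂ) (T : Fin (n+1) → Bool) :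
    fPart n f T = monomial (bTE n T) 1 * phi2 n (gPart n f T) := by
  rw [gPart, map_sum, Finset.mul_sum, fPart]
  apply Finset.sum_congr rfl
  intro α hα
  have hparity : parE n α = T := (Finset.mem_filter.mp hα).2
  rw [phi2_monomial, MvPolynomial.monomial_mul, one_mul, exp_decomp n α T hparity]

lemma claim1 (d : ℕ) (f : MvPolynomial (Fin (n+1)) ℂ) (hf : f ∈ fatIdeal n d)
    (b : Fin (n+1) → Bool) : (X : Polynomial (MvPolynomial (Fin (n+1)) ℂ)) ^ d ∣ psiT n b f := by
  set ε : Fin n → ℂ := fun j => sgC (b 0) * sgC (b j.succ) with hεdef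
  have hε : ∀ j, ε j = 1 ∨ ε j = -1 := by
    intro j
    cases h0 : b 0 <;> cases h1 : b j.succ <;> simp [hεdef, sgC, h0, h1]
  have hmem : f ∈ (pIdeal n ε) ^ d := by
    have := (Submodule.mem_iInf _).mp hf ⟨ε, hε⟩
    exact this
  have hmap : psiT n b f ∈ Ideal.map (psiT n b).toRingHom ((pIdeal n ε) ^ d) :=
    Ideal.mem_map_of_mem _ hmem
  rw [Ideal.map_pow] at hmap
  have hle : Ideal.map (psiT n b).toRingHom (pIdeal n ε)
      ≤ Ideal.span {(X : Polynomial (MvPolynomial (Fin (n+1)) ℂ))} := by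
    rw [pIdeal, Ideal.map_span]
    apply Ideal.span_le.mpr
    rintro _ ⟨p, ⟨j, rfl⟩, rfl⟩
    rw [SetLike.mem_coe, Ideal.mem_span_singleton]
    refine ⟨Polynomial.C (MvPolynomial.C (sgC (b j.succ)))
      * (Polynomial.C (MvPolynomial.X j.succ) - Polynomial.C (MvPolynomial.X 0)), ?_⟩
    show psiT n b (MvPolynomial.X j.succ - MvPolynomial.C (ε j) * MvPolynomial.X 0) = _
    rw [map_sub, map_mul]
    have hCε : psiT n b (MvPolynomial.C (ε j)) = Polynomial.C (MvPolynomial.C (ε j)) := by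
      simp [psiT, MvPolynomial.algebraMap_eq, Polynomial.algebraMap_apply]
    rw [hCε]
    simp only [psiT, MvPolynomial.aeval_X]
    cases h0 : b 0 <;> cases h1 : b j.succ <;>
      simp [hεdef, sgC, h0, h1, baseP] <;> ring
  have hpow : (Ideal.map (psiT n b).toRingHom (pIdeal n ε)) ^ d
      ≤ Ideal.span {(X : Polynomial (MvPolynomial (Fin (n+1)) ℂ))} ^ d :=
    Ideal.pow_right_mono hle d
  have := hpow hmap
  rw [Ideal.span_singleton_pow, Ideal.mem_span_singleton] at this
  exact this

lemma dvd_smulC {x y : Polynomial (MvPolynomial (Fin (n+1)) ℂ)} (c : ℂ) (h : x ∣ y) :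
    x ∣ c • y := by
  rw [Algebra.smul_def]
  exact Dvd.dvd.mul_left h _

lemma dvd_of_smul_ne {c : ℂ} (hc : c ≠ 0) {x y : Polynomial (MvPolynomial (Fin (n+1)) ℂ)}
    (h : x ∣ c • y) : x ∣ y := by
  have := dvd_smulC n c⁻¹ h
  rwa [smul_smul, inv_mul_cancel₀ hc, one_smul] at this

lemma psiA_monomial_coeff0 (α : Fin (n+1) →₀ ℕ) (c : ℂ) :
    (psiA n (monomial α c)).coeff 0
      = MvPolynomial.C c * (MvPolynomial.X (Fin.last n)) ^ (∑ i, α i) := by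
  rw [Polynomial.coeff_zero_eq_eval_zero, psiA, MvPolynomial.aeval_monomial]
  rw [Finsupp.prod_of_support_subset α (Finset.subset_univ _) _ (by intro i _; simp)]
  rw [Polynomial.eval_mul, Polynomial.eval_prod]
  have : ∀ i : Fin (n+1), Polynomial.eval 0 ((baseP n i) ^ α i)
      = (MvPolynomial.X (Fin.last n) : MvPolynomial (Fin (n+1)) ℂ) ^ α i := by
    intro i
    rw [Polynomial.eval_pow]
    simp [baseP]
  rw [Finset.prod_congr rfl (fun i _ => this i), Finset.prod_pow_eq_pow_sum]
  congr 1
  rw [Polynomial.algebraMap_apply, MvPolynomial.algebraMap_eq]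
  simp
end

section
variable (n : ℕ)
open MvPolynomial

noncomputable def jId : Ideal (MvPolynomial (Fin (n+1)) ℂ) :=
  Ideal.span { p : MvPolynomial (Fin (n+1)) ℂ |
    ∃ i : Fin n, p = MX (Fin.castSucc i) ^ 2 - MX (Fin.last n) ^ 2 }

lemma hardDir (d : ℕ) (f : MvPolynomial (Fin (n+1)) ℂ) (hf : f ∈ fatIdeal n d) :
    f ∈ (jId n) ^ d := by
  have hT : ∀ T : Fin (n+1) → Bool, fPart n f T ∈ (jId n) ^ d := by
    intro T
    have hdvd1 : (X : Polynomial (MvPolynomial (Fin (n+1)) ℂ)) ^ d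
        ∣ ((2:ℂ)^(n+1)) • psiA n (fPart n f T) := by
      rw [← fourierPsi]
      exact Finset.dvd_sum (fun b _ => dvd_smulC n _ (claim1 n d f hf b))
    have hdvd2 : (X : Polynomial (MvPolynomial (Fin (n+1)) ℂ)) ^ d ∣ psiA n (fPart n f T) :=
      dvd_of_smul_ne n (pow_ne_zero _ two_ne_zero) hdvd1
    rw [fPart_factor, map_mul] at hdvd2
    have hc0 : (psiA n (monomial (bTE n T) 1)).coeff 0 ≠ 0 := by
      rw [psiA_monomial_coeff0]
      simp only [map_one, one_mul]
      exact pow_ne_zero _ (MvPolynomial.X_ne_zero _)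
    have hdvd3 : (X : Polynomial (MvPolynomial (Fin (n+1)) ℂ)) ^ d
        ∣ psiA n (phi2 n (gPart n f T)) :=
      cancelG d _ hc0 _ hdvd2
    rw [← compId] at hdvd3
    have hdvd4 := keyF (betaH n).toRingHom (thetaInj n) d _ hdvd3
    have hg : gPart n f T ∈ (nId n) ^ d := stepC n d _ hdvd4
    have hphig : phi2 n (gPart n f T) ∈ (jId n) ^ d := by
      have h1 : phi2 n (gPart n f T) ∈ Ideal.map (phi2 n).toRingHom ((nId n) ^ d) :=
        Ideal.mem_map_of_mem _ hg
      rw [Ideal.map_pow] at h1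
      have h2 : Ideal.map (phi2 n).toRingHom (nId n) ≤ jId n := by
        rw [nId, Ideal.map_span]
        apply Ideal.span_le.mpr
        rintro _ ⟨p, ⟨i, rfl⟩, rfl⟩
        rw [SetLike.mem_coe]
        apply Ideal.subset_span
        refine ⟨i, ?_⟩
        show phi2 n (MX (Fin.castSucc i) - MX (Fin.last n)) = _
        simp [phi2]
      exact Ideal.pow_right_mono h2 d h1
    rw [fPart_factor]
    exact Ideal.mul_mem_left _ _ hphig
  rw [← sum_fPart n f]
  exact Ideal.sum_mem _ (fun T _ => hT T)

lemma sq_diff_mem (ε : Fin n → ℂ) (hε : ∀ j, ε j = 1 ∨ ε j = -1) (k : Fin (n+1)) :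
    MX k ^ 2 - MX (0 : Fin (n+1)) ^ 2 ∈ pIdeal n ε := by
  induction k using Fin.cases with
  | zero => simp
  | succ j =>
    have hgen : (MX j.succ - MvPolynomial.C (ε j) * MX (0 : Fin (n+1))) ∈ pIdeal n ε :=
      Ideal.subset_span ⟨j, rfl⟩
    have hsq : (ε j) ^ 2 = 1 := by
      rcases hε j with h | h <;> rw [h] <;> ring
    have : MX j.succ ^ 2 - MX (0 : Fin (n+1)) ^ 2
        = (MX j.succ + MvPolynomial.C (ε j) * MX (0 : Fin (n+1)))
          * (MX j.succ - MvPolynomial.C (ε j) * MX (0 : Fin (n+1))) := by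
      have hC : (MvPolynomial.C (ε j) : MvPolynomial (Fin (n+1)) ℂ) ^ 2 = 1 := by
        rw [← map_pow, hsq, map_one]
      linear_combination (MX (0 : Fin (n+1)) : MvPolynomial (Fin (n+1)) ℂ)^2 * hC
    rw [this]
    exact Ideal.mul_mem_left _ _ hgen

lemma easyDir (d : ℕ) : (jId n) ^ d ≤ fatIdeal n d := by
  rw [fatIdeal]
  apply le_iInf
  rintro ⟨ε, hε⟩
  apply Ideal.pow_right_mono
  rw [jId]
  apply Ideal.span_le.mpr
  rintro _ ⟨i, rfl⟩
  rw [SetLike.mem_coe]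
  have h1 := sq_diff_mem n ε hε (Fin.castSucc i)
  have h2 := sq_diff_mem n ε hε (Fin.last n)
  have : (MX (Fin.castSucc i) ^ 2 - MX (Fin.last n) ^ 2 : MvPolynomial (Fin (n+1)) ℂ)
      = (MX (Fin.castSucc i) ^ 2 - MX (0 : Fin (n+1)) ^ 2)
        - (MX (Fin.last n) ^ 2 - MX (0 : Fin (n+1)) ^ 2) := by ring
  rw [this]
  exact Ideal.sub_mem _ h1 h2
end

section
variable (n : ℕ)
open MvPolynomial

noncomputable def genG (i : Fin n) : MvPolynomial (Fin (n+1)) ℂ :=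
  MX (Fin.castSucc i) ^ 2 - MX (Fin.last n) ^ 2

lemma prodSplit (a : Fin n → ℕ) (i : Fin n) :
    ∏ j, genG n j ^ (a j + if j = i then 1 else 0) = (∏ j, genG n j ^ a j) * genG n i := by
  simp only [pow_add, Finset.prod_mul_distrib]
  congr 1
  rw [show (∏ j, genG n j ^ (if j = i then 1 else 0)) = ∏ j, (if j = i then genG n j else 1) by
    apply Finset.prod_congr rfl; intro j _; split <;> simp]
  rw [Finset.prod_ite_eq' Finset.univ i (genG n)]
  simp

lemma jPow_products (d : ℕ) :
    (jId n) ^ d = Ideal.span { p : MvPolynomial (Fin (n+1)) ℂ |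
      ∃ a : Fin n → ℕ, (∑ i, a i) = d ∧ p = ∏ i, genG n i ^ a i } := by
  induction d with
  | zero =>
    rw [pow_zero, Ideal.one_eq_top]
    symm
    rw [Ideal.eq_top_iff_one]
    apply Ideal.subset_span
    exact ⟨fun _ => 0, by simp⟩
  | succ d ih =>
    rw [pow_succ, ih, jId, Ideal.span_mul_span']
    apply le_antisymm
    · apply Ideal.span_le.mpr
      rintro x hx
      rw [Set.mem_mul] at hx
      obtain ⟨p, ⟨a, ha, rfl⟩, q, ⟨i, rfl⟩, rfl⟩ := hx
      rw [SetLike.mem_coe]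
      apply Ideal.subset_span
      refine ⟨fun j => a j + if j = i then 1 else 0, ?_, ?_⟩
      · rw [Finset.sum_add_distrib, ha]
        simp [Finset.sum_ite_eq']
      · rw [prodSplit]
        rfl
    · apply Ideal.span_le.mpr
      rintro x ⟨a, ha, rfl⟩
      rw [SetLike.mem_coe]
      obtain ⟨i, hi⟩ : ∃ i, a i ≠ 0 := by
        by_contra h
        push_neg at h
        rw [Finset.sum_eq_zero (fun i _ => h i)] at ha
        omega
      set a' : Fin n → ℕ := fun j => a j - (if j = i then 1 else 0) with ha'
      have hdecomp : ∀ j, a j = a' j + (if j = i then 1 else 0) := by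
        intro j
        by_cases hj : j = i <;> simp [ha', hj] <;> omega
      have hsum' : (∑ j, a' j) = d := by
        have : (∑ j, a j) = (∑ j, a' j) + 1 := by
          rw [Finset.sum_congr rfl (fun j _ => hdecomp j), Finset.sum_add_distrib]
          simp [Finset.sum_ite_eq']
        omega
      have hprod : (∏ j, genG n j ^ a j) = (∏ j, genG n j ^ a' j) * genG n i := by
        rw [Finset.prod_congr rfl (fun j _ => by rw [hdecomp j]), prodSplit]
      rw [hprod]
      apply Ideal.subset_span
      exact Set.mul_mem_mul ⟨a', hsum', rfl⟩ ⟨i, rfl⟩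
end
end
end HardWork

theorem stmt15 (n d : ℕ) (hn : 1 ≤ n) (hd : 1 ≤ d) :
    fatIdeal n d
      = (Ideal.span { p : MvPolynomial (Fin (n+1)) ℂ |
          ∃ i : Fin n, p = X (Fin.castSucc i) ^ 2 - X (Fin.last n) ^ 2 }) ^ d ∧
    fatIdeal n d
      = Ideal.span { p : MvPolynomial (Fin (n+1)) ℂ |
          ∃ a : Fin n → ℕ, (∑ i, a i) = d ∧
            p = ∏ i : Fin n,
              (X (Fin.castSucc i) ^ 2 - X (Fin.last n) ^ 2) ^ a i } := by
  have h1 : fatIdeal n d = (jId n) ^ d :=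
    le_antisymm (fun f hf => hardDir n d f hf) (easyDir n d)
  constructor
  · exact h1
  · rw [h1, jPow_products]
    rfl
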